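/- arXiv:1902.02509 — 2 statements merged into one kernel-verified Lean document; each statement's English description precedes it below -/
import Mathlib

section
/- Let Z ∈ R^{n×q} with singular values γ_1, …, γ_{n∧q}, and σ_min > 0. Then min over positive semidefinite S ⪰ σ_min·Id_n of (1/2)Tr(Zᵀ S⁻¹ Z) + (1/2)Tr(S) equals (1/2)∑_{i=1}^{n∧q} γ_i²/(γ_i ∨ σ_min) + (1/2)∑_{i=1}^{n∧q} (γ_i ∨ σ_min) + (1/2)(n − n∧q)σ_min, and the minimum is attained at S = SpCl((ZZᵀ)^{1/2}, σ_min) where SpCl clips the eigenvalues of the square root of ZZᵀ below at σ_min. -/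
open Matrix

/-- Singular values of a real `n × q` matrix (padded with zeros to length `n`):
square roots of the eigenvalues of `Z * Zᵀ`. -/
noncomputable def singVal {n q : ℕ} (Z : Matrix (Fin n) (Fin q) ℝ) (i : Fin n) : ℝ :=
  Real.sqrt ((Matrix.isHermitian_mul_conjTranspose_self Z).eigenvalues i)

/-- The clipped square root of `Z * Zᵀ`: same eigenvectors, eigenvalues `γ_i ∨ σ`. -/
noncomputable def spCl {n q : ℕ} (Z : Matrix (Fin n) (Fin q) ℝ) (σ : ℝ) :
    Matrix (Fin n) (Fin n) ℝ :=
  ((Matrix.isHermitian_mul_conjTranspose_self Z).eigenvectorUnitary :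
      Matrix (Fin n) (Fin n) ℝ)
    * Matrix.diagonal (fun i => max (singVal Z i) σ)
    * star ((Matrix.isHermitian_mul_conjTranspose_self Z).eigenvectorUnitary :
      Matrix (Fin n) (Fin n) ℝ)

section Aux

lemma aux_scalar (γ σ m t : ℝ) (hγ : 0 ≤ γ) (hσ : 0 < σ) (hm : σ ≤ m) (ht : (m)⁻¹ ≤ t) :
    γ ^ 2 / max γ σ + max γ σ ≤ γ ^ 2 * t + m := by
  have hm0 : 0 < m := lt_of_lt_of_le hσ hm
  have h1 : γ ^ 2 / m ≤ γ ^ 2 * t := by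
    rw [div_eq_mul_inv]; exact mul_le_mul_of_nonneg_left ht (by positivity)
  have h2 : γ ^ 2 / max γ σ + max γ σ ≤ γ ^ 2 / m + m := by
    rcases le_total γ σ with h | h
    · rw [max_eq_right h]
      rw [div_add' _ _ _ hσ.ne', div_add' _ _ _ hm0.ne', div_le_div_iff₀ hσ hm0]
      nlinarith [mul_le_mul h h hγ hσ.le, mul_le_mul_of_nonneg_right hm hσ.le]
    · have hγ0 : 0 < γ := lt_of_lt_of_le hσ h
      rw [max_eq_left h]
      rw [div_add' _ _ _ hγ0.ne', div_add' _ _ _ hm0.ne', div_le_div_iff₀ hγ0 hm0]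
      nlinarith [mul_nonneg hγ (sq_nonneg (m - γ))]
  linarith

lemma trace_mul_diagonal' {n : ℕ} (A : Matrix (Fin n) (Fin n) ℝ) (d : Fin n → ℝ) :
    (A * diagonal d).trace = ∑ i, A i i * d i := by
  simp [Matrix.trace, Matrix.mul_apply, Matrix.diagonal, Matrix.diag]

lemma conj_mul_conj {n : ℕ} (U V A B : Matrix (Fin n) (Fin n) ℝ) (h : V * U = 1) :
    (U * A * V) * (U * B * V) = U * (A * B) * V := by
  simp only [mul_assoc]
  rw [← mul_assoc V U (B * V), h, one_mul]

lemma psd_diag_nonneg {n : ℕ} {B : Matrix (Fin n) (Fin n) ℝ} (hB : B.PosSemidef) (i : Fin n) :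
    0 ≤ B i i := by
  simpa using hB.dotProduct_mulVec_nonneg (Pi.single i 1)

lemma inv_diag_ge {n : ℕ} {M : Matrix (Fin n) (Fin n) ℝ} (hM : M.PosDef) (i : Fin n) :
    (M i i)⁻¹ ≤ M⁻¹ i i := by
  have hm : 0 < M i i := by
    simpa using hM.dotProduct_mulVec_pos (x := Pi.single i 1) (Function.ne_iff.mpr ⟨i, by simp⟩)
  have hdet : IsUnit M.det := (Matrix.isUnit_iff_isUnit_det M).mp hM.isUnit
  have hMM : M * M⁻¹ = 1 := Matrix.mul_nonsing_inv M hdet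
  have hMsymm : Mᵀ = M := by
    have := hM.isHermitian
    rwa [Matrix.IsHermitian, conjTranspose_eq_transpose_of_trivial] at this
  set e : Fin n → ℝ := Pi.single i 1 with he
  set y : Fin n → ℝ := M⁻¹ *ᵥ e with hy
  set a : ℝ := (M i i)⁻¹ with ha
  set v : Fin n → ℝ := a • e - y with hv
  have h0 : 0 ≤ star v ⬝ᵥ (M *ᵥ v) := hM.posSemidef.dotProduct_mulVec_nonneg v
  have hMy : M *ᵥ y = e := by
    rw [hy, mulVec_mulVec, hMM, one_mulVec]
  have hMv : M *ᵥ v = a • (M *ᵥ e) - e := by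
    rw [hv, mulVec_sub, mulVec_smul, hMy]
  have hee : e ⬝ᵥ e = 1 := by simp [he]
  have heMe : e ⬝ᵥ (M *ᵥ e) = M i i := by simp [he]
  have hyMe : y ⬝ᵥ (M *ᵥ e) = 1 := by
    rw [dotProduct_mulVec, ← Matrix.mulVec_transpose, hMsymm, hMy, hee]
  have hye : y ⬝ᵥ e = M⁻¹ i i := by
    simp [hy, he, mulVec_single, dotProduct, Pi.single_apply]
  have hstar : star v = v := by
    funext j; simp
  rw [hstar, hMv, hv] at h0
  simp only [sub_dotProduct, dotProduct_sub, smul_dotProduct, dotProduct_smul, hee, heMe,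
    hyMe, hye, smul_eq_mul] at h0
  have h2 : a * (a * M i i) - a * 1 - (a * 1 - M⁻¹ i i) ≥ 0 := by linarith
  rw [ha] at h2 ⊢
  have h1 : (M i i)⁻¹ * M i i = 1 := inv_mul_cancel₀ hm.ne'
  nlinarith [h2]

lemma posdef_conj {n : ℕ} {S : Matrix (Fin n) (Fin n) ℝ} (hS : S.PosDef)
    (U : Matrix (Fin n) (Fin n) ℝ) (hU : star U * U = 1) :
    ((star U) * S * U).PosDef := by
  refine Matrix.PosDef.of_dotProduct_mulVec_pos ?_ ?_
  · have hSh := hS.isHermitian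
    have hSt : Sᵀ = S := by
      rwa [Matrix.IsHermitian, conjTranspose_eq_transpose_of_trivial] at hSh
    simp [Matrix.IsHermitian, conjTranspose_mul, hSt, mul_assoc, Matrix.star_eq_conjTranspose]
  · intro x hx
    have hUx : U *ᵥ x ≠ 0 := by
      intro h
      apply hx
      have h2 : star U *ᵥ (U *ᵥ x) = 0 := by rw [h, mulVec_zero]
      rwa [mulVec_mulVec, hU, one_mulVec] at h2
    have h3 := hS.dotProduct_mulVec_pos hUx
    have key : star x ⬝ᵥ ((star U * S * U) *ᵥ x) = star (U *ᵥ x) ⬝ᵥ (S *ᵥ (U *ᵥ x)) := by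
      rw [← mulVec_mulVec, ← mulVec_mulVec]
      rw [dotProduct_mulVec (star x) (star U)]
      congr 1
      funext j
      simp [Matrix.vecMul, Matrix.mulVec, dotProduct, Matrix.star_apply, mul_comm]
    rwa [key]

/-- abbreviation for the eigenvector unitary of `Z * Zᴴ`. -/
noncomputable def evU {n q : ℕ} (Z : Matrix (Fin n) (Fin q) ℝ) : Matrix (Fin n) (Fin n) ℝ :=
  ((Matrix.isHermitian_mul_conjTranspose_self Z).eigenvectorUnitary :
      Matrix (Fin n) (Fin n) ℝ)

lemma evU_star_mul {n q : ℕ} (Z : Matrix (Fin n) (Fin q) ℝ) : star (evU Z) * evU Z = 1 :=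
  Unitary.coe_star_mul_self _

lemma evU_mul_star {n q : ℕ} (Z : Matrix (Fin n) (Fin q) ℝ) : evU Z * star (evU Z) = 1 :=
  Unitary.coe_mul_star_self _

lemma singVal_nonneg {n q : ℕ} (Z : Matrix (Fin n) (Fin q) ℝ) (i : Fin n) : 0 ≤ singVal Z i :=
  Real.sqrt_nonneg _

lemma singVal_sq {n q : ℕ} (Z : Matrix (Fin n) (Fin q) ℝ) (i : Fin n) :
    singVal Z i ^ 2 = (Matrix.isHermitian_mul_conjTranspose_self Z).eigenvalues i :=
  Real.sq_sqrt (Matrix.eigenvalues_self_mul_conjTranspose_nonneg Z i)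

lemma spectral_Z {n q : ℕ} (Z : Matrix (Fin n) (Fin q) ℝ) :
    Z * Zᴴ = evU Z * diagonal (fun i => singVal Z i ^ 2) * star (evU Z) := by
  have h := (Matrix.isHermitian_mul_conjTranspose_self Z).spectral_theorem
  rw [h]
  congr 1
  congr 1
  funext i
  simp [singVal_sq, RCLike.ofReal_real_eq_id, evU]
  rfl

lemma spCl_eq {n q : ℕ} (Z : Matrix (Fin n) (Fin q) ℝ) (σ : ℝ) :
    spCl Z σ = evU Z * diagonal (fun i => max (singVal Z i) σ) * star (evU Z) := rfl

end Aux

/-- For `Z ∈ ℝ^{n×q}` with singular values `γ_i` and `σ_min > 0`, the minimum over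
`S ⪰ σ_min·Id` of `(1/2)Tr(Zᵀ S⁻¹ Z) + (1/2)Tr(S)` equals
`(1/2)∑ γ_i²/(γ_i ∨ σ_min) + (1/2)∑ (γ_i ∨ σ_min)` (over the `n` padded singular
values, which accounts for the extra `(1/2)(n − n∧q)σ_min` term), attained at the
clipped square root of `ZZᵀ`. -/
theorem stmt6 {n q : ℕ} (Z : Matrix (Fin n) (Fin q) ℝ) (σmin : ℝ) (hσ : 0 < σmin) :
    (∀ S : Matrix (Fin n) (Fin n) ℝ, S.IsHermitian →
        (S - σmin • (1 : Matrix (Fin n) (Fin n) ℝ)).PosSemidef →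
        (1 / 2) * (Zᵀ * (spCl Z σmin)⁻¹ * Z).trace + (1 / 2) * (spCl Z σmin).trace
          ≤ (1 / 2) * (Zᵀ * S⁻¹ * Z).trace + (1 / 2) * S.trace)
      ∧ (spCl Z σmin).IsHermitian
      ∧ (spCl Z σmin - σmin • (1 : Matrix (Fin n) (Fin n) ℝ)).PosSemidef
      ∧ (1 / 2) * (Zᵀ * (spCl Z σmin)⁻¹ * Z).trace + (1 / 2) * (spCl Z σmin).trace
          = (1 / 2) * ∑ i, (singVal Z i) ^ 2 / max (singVal Z i) σmin
            + (1 / 2) * ∑ i, max (singVal Z i) σmin := by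
  classical
  set U := evU Z with hU_def
  set g : Fin n → ℝ := fun i => max (singVal Z i) σmin with hg_def
  have hgpos : ∀ i, 0 < g i := fun i => lt_max_of_lt_right hσ
  have hZT : Zᵀ = Zᴴ := (conjTranspose_eq_transpose_of_trivial Z).symm
  have hsU : star U * U = 1 := evU_star_mul Z
  have hUs : U * star U = 1 := evU_mul_star Z
  -- the inverse of spCl
  have hspCl_inv : (spCl Z σmin)⁻¹ = U * diagonal (fun i => (g i)⁻¹) * star U := by
    apply Matrix.inv_eq_right_inv
    rw [spCl_eq, conj_mul_conj _ _ _ _ hsU, diagonal_mul_diagonal]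
    have : (fun i => g i * (g i)⁻¹) = fun _ => (1:ℝ) := by
      funext i; exact mul_inv_cancel₀ (hgpos i).ne'
    rw [show ((fun i => g i * (g i)⁻¹) : Fin n → ℝ) = fun _ => (1:ℝ) from this,
      diagonal_one, mul_one, hUs]
  -- trace of spCl
  have t1 : (spCl Z σmin).trace = ∑ i, g i := by
    rw [spCl_eq, Matrix.trace_mul_cycle, ← hU_def, hsU, one_mul, trace_diagonal]
  -- trace of the Z-part at spCl
  have t2 : (Zᵀ * (spCl Z σmin)⁻¹ * Z).trace = ∑ i, singVal Z i ^ 2 * (g i)⁻¹ := by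
    rw [hZT, Matrix.trace_mul_cycle, spectral_Z Z, hspCl_inv, ← hU_def,
      conj_mul_conj _ _ _ _ hsU, Matrix.trace_mul_cycle, hsU, one_mul,
      diagonal_mul_diagonal, trace_diagonal]
  -- Hermitian
  have hherm : (spCl Z σmin).IsHermitian := by
    rw [spCl_eq]
    have hD : (diagonal (fun i => max (singVal Z i) σmin) :
        Matrix (Fin n) (Fin n) ℝ).IsHermitian := by
      simp [Matrix.IsHermitian, diagonal_conjTranspose]
    have := Matrix.isHermitian_mul_mul_conjTranspose (evU Z) hD
    rwa [← Matrix.star_eq_conjTranspose] at this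
  -- PSD of spCl - σ 1
  have hpsd : (spCl Z σmin - σmin • (1 : Matrix (Fin n) (Fin n) ℝ)).PosSemidef := by
    have key : spCl Z σmin - σmin • 1 = U * diagonal (fun i => g i - σmin) * star U := by
      rw [spCl_eq, ← hU_def]
      have : (diagonal (fun i => g i - σmin) : Matrix (Fin n) (Fin n) ℝ)
          = diagonal g - σmin • 1 := by
        rw [smul_one_eq_diagonal, diagonal_sub]
      rw [this, Matrix.mul_sub, Matrix.sub_mul, Matrix.mul_smul, mul_one,
        Matrix.smul_mul, hUs]
    rw [key]
    have hd : (diagonal (fun i => g i - σmin) : Matrix (Fin n) (Fin n) ℝ).PosSemidef :=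
      Matrix.posSemidef_diagonal_iff.mpr fun i => by
        simp [hg_def, sub_nonneg, le_max_right]
    have := hd.mul_mul_conjTranspose_same U
    rwa [← Matrix.star_eq_conjTranspose] at this
  refine ⟨?_, hherm, hpsd, ?_⟩
  · intro S hSh hS1
    have hσ1 : (σmin • (1 : Matrix (Fin n) (Fin n) ℝ)).PosDef := by
      rw [smul_one_eq_diagonal]
      exact Matrix.posDef_diagonal_iff.mpr fun i => hσ
    have hSpd : S.PosDef := by
      have h : S = σmin • 1 + (S - σmin • 1) := by abel
      rw [h]; exact hσ1.add_posSemidef hS1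
    set M : Matrix (Fin n) (Fin n) ℝ := star U * S * U with hM_def
    have hMpd : M.PosDef := posdef_conj hSpd U hsU
    have hMdiag : ∀ i, σmin ≤ M i i := by
      intro i
      have key : star U * (S - σmin • 1) * U = M - σmin • 1 := by
        rw [Matrix.mul_sub, Matrix.sub_mul, Matrix.mul_smul, mul_one, Matrix.smul_mul, hsU]
      have hp : (M - σmin • 1).PosSemidef := by
        rw [← key]
        have := hS1.mul_mul_conjTranspose_same (star U)
        rwa [← Matrix.star_eq_conjTranspose, star_star] at this
      have := psd_diag_nonneg hp i
      simp only [Matrix.sub_apply, Matrix.smul_apply, Matrix.one_apply_eq, smul_eq_mul,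
        mul_one] at this
      linarith
    have hMinv : M⁻¹ = star U * S⁻¹ * U := by
      apply Matrix.inv_eq_right_inv
      rw [hM_def, conj_mul_conj _ _ _ _ hUs,
        Matrix.mul_nonsing_inv S ((Matrix.isUnit_iff_isUnit_det S).mp hSpd.isUnit),
        mul_one, hsU]
    have trS : S.trace = ∑ i, M i i := by
      have : M.trace = S.trace := by
        rw [hM_def, Matrix.trace_mul_cycle, hUs, one_mul]
      rw [← this, Matrix.trace]
      rfl
    have trZS : (Zᵀ * S⁻¹ * Z).trace = ∑ i, singVal Z i ^ 2 * M⁻¹ i i := by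
      rw [hZT, Matrix.trace_mul_cycle, spectral_Z Z, ← hU_def,
        Matrix.trace_mul_cycle, Matrix.trace_mul_cycle, ← Matrix.mul_assoc, ← hMinv,
        trace_mul_diagonal']
      apply Finset.sum_congr rfl
      intro i _
      rw [mul_comm]
    rw [t1, t2, trS, trZS]
    have hsum : ∑ i, (singVal Z i ^ 2 * (g i)⁻¹ + g i)
        ≤ ∑ i, (singVal Z i ^ 2 * M⁻¹ i i + M i i) := by
      apply Finset.sum_le_sum
      intro i _
      have h1 := aux_scalar (singVal Z i) σmin (M i i) (M⁻¹ i i) (singVal_nonneg Z i) hσ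
        (hMdiag i) (inv_diag_ge hMpd i)
      have hgi : g i = max (singVal Z i) σmin := rfl
      have h2 : singVal Z i ^ 2 / max (singVal Z i) σmin
          = singVal Z i ^ 2 * (max (singVal Z i) σmin)⁻¹ := div_eq_mul_inv _ _
      rw [hgi]
      linarith [h1]
    rw [Finset.sum_add_distrib, Finset.sum_add_distrib] at hsum
    linarith
  · rw [t1, t2]
    simp only [div_eq_mul_inv]
    rfl
end

section
/- Let Z ∈ R^{n×q} with singular values γ_1, …, γ_{n∧q}, and σ > 0. Define g_σ(Z) = min_{S ⪰ σ Id_n} (1/2)Tr(Zᵀ S⁻¹ Z) + (1/2)Tr(S). Then 0 ≤ g_σ(Z) − ‖Z‖_{S,1} = (1/(2σ))∑_{γ_i ≤ σ}(γ_i − σ)² + (1/2)(n − n∧q)σ ≤ (n/2)σ. In particular g_σ is an (n/2)σ-uniform approximation of the nuclear norm, with the upper bound attained at Z = 0. -/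
open Matrix

/-- Nuclear norm (Schatten 1-norm): sum of the singular values. -/
noncomputable def nucNorm {n q : ℕ} (Z : Matrix (Fin n) (Fin q) ℝ) : ℝ :=
  ∑ i, singVal Z i

/-- `g_σ(Z) = min_{S ⪰ σ Id} (1/2)Tr(Zᵀ S⁻¹ Z) + (1/2)Tr(S)`. -/
noncomputable def gSmooth {n q : ℕ} (σ : ℝ) (Z : Matrix (Fin n) (Fin q) ℝ) : ℝ :=
  sInf {x : ℝ | ∃ S : Matrix (Fin n) (Fin n) ℝ, S.IsHermitian ∧
    (S - σ • (1 : Matrix (Fin n) (Fin n) ℝ)).PosSemidef ∧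
    x = (1 / 2) * (Zᵀ * S⁻¹ * Z).trace + (1 / 2) * S.trace}

open scoped MatrixOrder

lemma myTrace_nonneg {m : ℕ} {M : Matrix (Fin m) (Fin m) ℝ} (h : M.PosSemidef) :
    0 ≤ M.trace := by
  rw [Matrix.trace]
  refine Finset.sum_nonneg fun i _ => ?_
  have := h.diag_nonneg (i := i)
  simpa using this

lemma myTrace_mul_nonneg {m : ℕ} {P Q : Matrix (Fin m) (Fin m) ℝ}
    (hP : P.PosSemidef) (hQ : Q.PosSemidef) : 0 ≤ (P * Q).trace := by
  obtain ⟨C, rfl⟩ : ∃ C : Matrix (Fin m) (Fin m) ℝ, P = Cᴴ * C :=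
    CStarAlgebra.nonneg_iff_eq_star_mul_self.mp hP.nonneg
  rw [← Matrix.trace_mul_cycle C Q Cᴴ]
  exact myTrace_nonneg (hQ.mul_mul_conjTranspose_same C)

lemma myPSD_smul {m : ℕ} {M : Matrix (Fin m) (Fin m) ℝ} (h : M.PosSemidef) {c : ℝ}
    (hc : 0 ≤ c) : (c • M).PosSemidef := by
  refine ⟨?_, fun x => ?_⟩
  · unfold Matrix.IsHermitian
    rw [Matrix.conjTranspose_smul, h.1.eq]
    simp
  · exact (h.smul hc).2 x

open Classical in
lemma gSmooth_eq_sum {n q : ℕ} (Z : Matrix (Fin n) (Fin q) ℝ) (σ : ℝ) (hσ : 0 < σ) :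
    gSmooth σ Z
      = ∑ i, (singVal Z i ^ 2 / (2 * max (singVal Z i) σ) + max (singVal Z i) σ / 2) := by
  have hA : (Z * Zᴴ).IsHermitian := Matrix.isHermitian_mul_conjTranspose_self Z
  have hApsd : (Z * Zᴴ).PosSemidef := Matrix.posSemidef_self_mul_conjTranspose Z
  set γ : Fin n → ℝ := singVal Z with hγdef
  have hγnn : ∀ i, 0 ≤ γ i := fun i => Real.sqrt_nonneg _
  have hlam : ∀ i, hA.eigenvalues i = γ i ^ 2 := fun i =>
    (Real.sq_sqrt (hApsd.eigenvalues_nonneg i)).symm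
  set U : Matrix (Fin n) (Fin n) ℝ := ↑(hA.eigenvectorUnitary) with hUdef
  have hU1 : U * star U = 1 := Matrix.mem_unitaryGroup_iff.mp hA.eigenvectorUnitary.2
  have hU2 : star U * U = 1 := Matrix.mem_unitaryGroup_iff'.mp hA.eigenvectorUnitary.2
  set b : Fin n → ℝ := fun i => max (γ i) σ with hbdef
  have hbi : ∀ i, max (γ i) σ = b i := fun _ => rfl
  simp only [hbi]
  have hbσ : ∀ i, σ ≤ b i := fun i => le_max_right _ _
  have hb0 : ∀ i, 0 < b i := fun i => lt_of_lt_of_le hσ (hbσ i)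
  have hγb : ∀ i, γ i ≤ b i := fun i => le_max_left _ _
  -- conjugation helpers
  have cmul : ∀ X Y : Matrix (Fin n) (Fin n) ℝ,
      (U * X * star U) * (U * Y * star U) = U * (X * Y) * star U := by
    intro X Y
    calc (U * X * star U) * (U * Y * star U)
        = U * X * ((star U * U) * (Y * star U)) := by simp only [Matrix.mul_assoc]
      _ = U * (X * Y) * star U := by rw [hU2, one_mul]; simp only [Matrix.mul_assoc]
  have ctrace : ∀ X : Matrix (Fin n) (Fin n) ℝ, (U * X * star U).trace = X.trace := by
    intro X
    rw [Matrix.trace_mul_cycle, hU2, one_mul]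
  have cherm : ∀ X : Matrix (Fin n) (Fin n) ℝ, X.IsHermitian → (U * X * star U).IsHermitian := by
    intro X hX
    show _ = _
    simp only [Matrix.conjTranspose_mul, Matrix.star_eq_conjTranspose,
      Matrix.conjTranspose_conjTranspose, hX.eq, Matrix.mul_assoc]
  have cpsd : ∀ X : Matrix (Fin n) (Fin n) ℝ, X.PosSemidef → (U * X * star U).PosSemidef := by
    intro X hX
    have := hX.mul_mul_conjTranspose_same U
    rwa [← Matrix.star_eq_conjTranspose] at this
  set D : Matrix (Fin n) (Fin n) ℝ := Matrix.diagonal b with hDdef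
  set B : Matrix (Fin n) (Fin n) ℝ := U * D * star U with hBdef
  have hDherm : D.IsHermitian := Matrix.isHermitian_diagonal b
  have hBherm : B.IsHermitian := cherm D hDherm
  have hAspec : Z * Zᴴ = U * Matrix.diagonal hA.eigenvalues * star U := by
    have := hA.spectral_theorem
    simpa [RCLike.ofReal_real_eq_id, -Matrix.conjTranspose_eq_transpose_of_trivial] using this
  have hBinv : B⁻¹ = U * Matrix.diagonal (fun i => (b i)⁻¹) * star U := by
    apply Matrix.inv_eq_right_inv
    have h1 : D * Matrix.diagonal (fun i => (b i)⁻¹) = 1 := by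
      have h2 : (fun i => b i * (b i)⁻¹) = fun _ => (1 : ℝ) :=
        funext fun i => mul_inv_cancel₀ (hb0 i).ne'
      rw [hDdef, Matrix.diagonal_mul_diagonal, h2, Matrix.diagonal_one]
    rw [hBdef, cmul, h1, Matrix.mul_one, hU1]
  have htB : B.trace = ∑ i, b i := by
    rw [hBdef, ctrace, hDdef, Matrix.trace_diagonal]
  have hZt : ∀ S : Matrix (Fin n) (Fin n) ℝ, (Zᵀ * S * Z).trace = (Z * Zᴴ * S).trace := by
    intro S
    rw [Matrix.trace_mul_cycle, Matrix.conjTranspose_eq_transpose_of_trivial]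
  have hAB : (Z * Zᴴ * B⁻¹).trace = ∑ i, γ i ^ 2 * (b i)⁻¹ := by
    rw [hAspec, hBinv, cmul, Matrix.diagonal_mul_diagonal, ctrace, Matrix.trace_diagonal]
    simp [hlam, -Matrix.conjTranspose_eq_transpose_of_trivial]
  -- B - σ•1 is PSD
  have hσ1 : U * (σ • (1 : Matrix (Fin n) (Fin n) ℝ)) * star U = σ • 1 := by
    rw [mul_smul_comm, Matrix.mul_one, smul_mul_assoc, hU1]
  have hBshift : (B - σ • (1 : Matrix (Fin n) (Fin n) ℝ)).PosSemidef := by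
    have hBs : B - σ • (1 : Matrix (Fin n) (Fin n) ℝ)
        = U * (D - σ • 1) * star U := by
      rw [Matrix.mul_sub, Matrix.sub_mul, hσ1]
    rw [hBs]
    refine cpsd _ ?_
    rw [hDdef, Matrix.smul_one_eq_diagonal, Matrix.diagonal_sub]
    exact Matrix.PosSemidef.diagonal fun i => sub_nonneg.2 (hbσ i)
  -- B*B - A
  have hBBA : B * B - Z * Zᴴ = U * Matrix.diagonal (fun i => b i ^ 2 - γ i ^ 2) * star U := by
    have hDD : D * D = Matrix.diagonal (fun i => b i ^ 2) := by
      have h2 : (fun i => b i * b i) = fun i => b i ^ 2 := funext fun i => (sq (b i)).symm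
      rw [hDdef, Matrix.diagonal_mul_diagonal, h2]
    have hdsub : Matrix.diagonal (fun i => b i ^ 2) - Matrix.diagonal hA.eigenvalues
        = Matrix.diagonal (fun i => b i ^ 2 - γ i ^ 2) := by
      rw [Matrix.diagonal_sub]
      refine congrArg _ (funext fun i => ?_)
      rw [hlam]
    rw [hBdef, cmul, hDD, hAspec, ← Matrix.sub_mul, ← Matrix.mul_sub, hdsub]
  have hBBApsd : (B * B - Z * Zᴴ).PosSemidef := by
    rw [hBBA]
    exact cpsd _ (Matrix.PosSemidef.diagonal fun i =>
      sub_nonneg.2 (pow_le_pow_left₀ (hγnn i) (hγb i) 2))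
  have htBBA : (B * B - Z * Zᴴ).trace = ∑ i, (b i ^ 2 - γ i ^ 2) := by
    rw [hBBA, ctrace, Matrix.trace_diagonal]
  -- the candidate value
  set V : ℝ := ∑ i, (γ i ^ 2 / (2 * b i) + b i / 2) with hVdef
  -- membership
  have hmemval : (1 / 2) * (Zᵀ * B⁻¹ * Z).trace + (1 / 2) * B.trace = V := by
    rw [hZt, hAB, htB, hVdef, Finset.mul_sum, Finset.mul_sum, ← Finset.sum_add_distrib]
    refine Finset.sum_congr rfl fun i _ => ?_
    have := (hb0 i).ne'
    field_simp
    try ring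
  -- lower bound
  have hlow : ∀ x ∈ {x : ℝ | ∃ S : Matrix (Fin n) (Fin n) ℝ, S.IsHermitian ∧
      (S - σ • (1 : Matrix (Fin n) (Fin n) ℝ)).PosSemidef ∧
      x = (1 / 2) * (Zᵀ * S⁻¹ * Z).trace + (1 / 2) * S.trace}, V ≤ x := by
    rintro x ⟨S, hSh, hSshift, rfl⟩
    have hSpd : S.PosDef := by
      have h1 : (σ • (1 : Matrix (Fin n) (Fin n) ℝ)).PosDef := by
        rw [Matrix.smul_one_eq_diagonal]
        exact Matrix.posDef_diagonal_iff.mpr fun _ => hσ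
      have := Matrix.PosDef.posSemidef_add hSshift h1
      simpa using this
    have hSdet : IsUnit S.det := hSpd.det_pos.ne'.isUnit
    have hSS : S * S⁻¹ = 1 := Matrix.mul_nonsing_inv S hSdet
    have hSS' : S⁻¹ * S = 1 := Matrix.nonsing_inv_mul S hSdet
    have hSinv : S⁻¹.PosDef := hSpd.inv
    have hRpsd : S.PosSemidef := hSpd.posSemidef
    set R : Matrix (Fin n) (Fin n) ℝ := CFC.sqrt S with hRdef
    have hRR : R * R = S := CFC.sqrt_mul_sqrt_self S hRpsd.nonneg
    have hRherm : R.IsHermitian := (CFC.sqrt_nonneg S).posSemidef.1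
    have hRdet : R.det ≠ 0 := by
      intro h
      have hds : R.det * R.det = S.det := by rw [← Matrix.det_mul, hRR]
      rw [h, zero_mul] at hds
      exact hSpd.det_pos.ne' hds.symm
    have hRinv : R * R⁻¹ = 1 := Matrix.mul_nonsing_inv R (isUnit_iff_ne_zero.mpr hRdet)
    have hRinv' : R⁻¹ * R = 1 := Matrix.nonsing_inv_mul R (isUnit_iff_ne_zero.mpr hRdet)
    have hRRinv : R⁻¹ * R⁻¹ = S⁻¹ := by rw [← hRR, Matrix.mul_inv_rev]
    have key : σ⁻¹ • (1 : Matrix (Fin n) (Fin n) ℝ) - S⁻¹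
        = σ⁻¹ • (R⁻¹ * (S - σ • 1) * R⁻¹) := by
      have e1 : R⁻¹ * S * R⁻¹ = 1 := by
        rw [← hRR, ← Matrix.mul_assoc, hRinv', one_mul, hRinv]
      have e2 : R⁻¹ * (σ • (1 : Matrix (Fin n) (Fin n) ℝ)) * R⁻¹ = σ • S⁻¹ := by
        rw [mul_smul_comm, Matrix.mul_one, smul_mul_assoc, hRRinv]
      rw [Matrix.mul_sub, Matrix.sub_mul, e2]
      rw [show R⁻¹ * S * R⁻¹ = 1 from e1]
      rw [smul_sub, smul_smul, inv_mul_cancel₀ hσ.ne', one_smul]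
    have keyPSD : (σ⁻¹ • (1 : Matrix (Fin n) (Fin n) ℝ) - S⁻¹).PosSemidef := by
      rw [key]
      refine myPSD_smul ?_ (inv_nonneg.mpr hσ.le)
      have := hSshift.mul_mul_conjTranspose_same R⁻¹
      rwa [hRherm.inv.eq] at this
    -- first trace inequality
    have hi1 : 2 * B.trace ≤ (B * B * S⁻¹).trace + S.trace := by
      have hpsd := hSinv.posSemidef.mul_mul_conjTranspose_same (B - S)
      rw [(hBherm.sub hSh).eq] at hpsd
      have h0 := myTrace_nonneg hpsd
      have e1 : (B - S) * S⁻¹ * (B - S)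
          = B * S⁻¹ * B - B * (S⁻¹ * S) - (S * S⁻¹) * B + (S * S⁻¹) * S := by
        noncomm_ring
      rw [e1, hSS, hSS', Matrix.mul_one, one_mul] at h0
      have e2 : (B * S⁻¹ * B).trace = (B * B * S⁻¹).trace := Matrix.trace_mul_cycle B S⁻¹ B
      rw [Matrix.trace_add, Matrix.trace_sub, Matrix.trace_sub, e2] at h0
      simp only [one_mul, Matrix.mul_one] at h0
      linarith
    -- second trace inequality
    have hi2 : ((B * B - Z * Zᴴ) * S⁻¹).trace ≤ σ⁻¹ * (B * B - Z * Zᴴ).trace := by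
      have h0 := myTrace_mul_nonneg hBBApsd keyPSD
      have hexp : (B * B - Z * Zᴴ) * (σ⁻¹ • (1 : Matrix (Fin n) (Fin n) ℝ) - S⁻¹)
          = σ⁻¹ • (B * B - Z * Zᴴ) - (B * B - Z * Zᴴ) * S⁻¹ := by
        rw [Matrix.mul_sub, mul_smul_comm, Matrix.mul_one]
      rw [hexp, Matrix.trace_sub, Matrix.trace_smul, smul_eq_mul] at h0
      linarith
    have hsplit : (Z * Zᴴ * S⁻¹).trace
        = (B * B * S⁻¹).trace - ((B * B - Z * Zᴴ) * S⁻¹).trace := by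
      rw [← Matrix.trace_sub, ← Matrix.sub_mul]
      congr 2
      noncomm_ring
    have hVeq : V = ∑ i, b i - σ⁻¹ / 2 * ∑ i, (b i ^ 2 - γ i ^ 2) := by
      rw [hVdef, Finset.mul_sum, ← Finset.sum_sub_distrib]
      refine Finset.sum_congr rfl fun i _ => ?_
      rcases le_total σ (γ i) with h | h
      · have hb : b i = γ i := max_eq_left h
        have hg0 : γ i ≠ 0 := (lt_of_lt_of_le hσ h).ne'
        rw [hb]
        field_simp
        ring
      · have hb : b i = σ := max_eq_right h
        rw [hb]
        field_simp
        ring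
    rw [hZt, hsplit, hVeq, ← htB, ← htBBA]
    linarith
  -- conclude
  rw [gSmooth]
  apply le_antisymm
  · exact csInf_le ⟨V, hlow⟩ ⟨B, hBherm, hBshift, hmemval.symm⟩
  · exact le_csInf ⟨V, B, hBherm, hBshift, hmemval.symm⟩ hlow

lemma singVal_zero {n q : ℕ} (i : Fin n) : singVal (0 : Matrix (Fin n) (Fin q) ℝ) i = 0 := by
  have hA : ((0 : Matrix (Fin n) (Fin q) ℝ) * (0 : Matrix (Fin n) (Fin q) ℝ)ᴴ).IsHermitian :=
    Matrix.isHermitian_mul_conjTranspose_self 0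
  have h2 : hA.eigenvalues i = 0 := by
    have h3 := hA.eigenvalues_eq i
    simp only [Matrix.zero_mul, Matrix.zero_mulVec, dotProduct_zero] at h3
    simpa using h3
  show Real.sqrt (hA.eigenvalues i) = 0
  rw [h2, Real.sqrt_zero]

open Classical in
/-- `0 ≤ g_σ(Z) − ‖Z‖_{S,1} = (1/(2σ))∑_{γ_i ≤ σ}(γ_i − σ)² ≤ (n/2)σ`
(the sum over the `n` zero-padded singular values accounts for the `(1/2)(n − n∧q)σ`
term), so `g_σ` is an `(n/2)σ`-uniform approximation of the nuclear norm, the upper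
bound being attained at `Z = 0`. -/
theorem stmt8 {n q : ℕ} (Z : Matrix (Fin n) (Fin q) ℝ) (σ : ℝ) (hσ : 0 < σ) :
    0 ≤ gSmooth σ Z - nucNorm Z
      ∧ gSmooth σ Z - nucNorm Z
          = (1 / (2 * σ)) * ∑ i ∈ Finset.univ.filter (fun i => singVal Z i ≤ σ),
              (singVal Z i - σ) ^ 2
      ∧ gSmooth σ Z - nucNorm Z ≤ (n / 2) * σ
      ∧ gSmooth σ (0 : Matrix (Fin n) (Fin q) ℝ) - nucNorm (0 : Matrix (Fin n) (Fin q) ℝ)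
          = (n / 2) * σ := by
  have hγnn : ∀ i, 0 ≤ singVal Z i := fun i => Real.sqrt_nonneg _
  have hdiff : gSmooth σ Z - nucNorm Z
      = ∑ i, (singVal Z i ^ 2 / (2 * max (singVal Z i) σ) + max (singVal Z i) σ / 2
          - singVal Z i) := by
    rw [gSmooth_eq_sum Z σ hσ, nucNorm, ← Finset.sum_sub_distrib]
  have hterm : ∀ i : Fin n,
      singVal Z i ^ 2 / (2 * max (singVal Z i) σ) + max (singVal Z i) σ / 2 - singVal Z i
        = if singVal Z i ≤ σ then 1 / (2 * σ) * (singVal Z i - σ) ^ 2 else 0 := by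
    intro i
    rcases le_or_gt (singVal Z i) σ with h | h
    · rw [max_eq_right h, if_pos h]
      field_simp
      ring
    · rw [max_eq_left h.le, if_neg (not_le.mpr h)]
      have hne : singVal Z i ≠ 0 := (hσ.trans h).ne'
      field_simp
      ring
  have heq2 : gSmooth σ Z - nucNorm Z
      = (1 / (2 * σ)) * ∑ i ∈ Finset.univ.filter (fun i => singVal Z i ≤ σ),
          (singVal Z i - σ) ^ 2 := by
    rw [hdiff, Finset.sum_congr rfl fun i _ => hterm i, ← Finset.sum_filter, Finset.mul_sum]
  have hsumnn : 0 ≤ ∑ i ∈ Finset.univ.filter (fun i => singVal Z i ≤ σ),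
      (singVal Z i - σ) ^ 2 := Finset.sum_nonneg fun i _ => sq_nonneg _
  refine ⟨?_, heq2, ?_, ?_⟩
  · rw [heq2]
    exact mul_nonneg (by positivity) hsumnn
  · rw [heq2]
    have hbound : ∑ i ∈ Finset.univ.filter (fun i => singVal Z i ≤ σ),
        (singVal Z i - σ) ^ 2 ≤ (n : ℝ) * σ ^ 2 := by
      calc ∑ i ∈ Finset.univ.filter (fun i => singVal Z i ≤ σ), (singVal Z i - σ) ^ 2
          ≤ ∑ _i ∈ Finset.univ.filter (fun i => singVal Z i ≤ σ), σ ^ 2 := by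
            refine Finset.sum_le_sum fun i hi => ?_
            have h1 : singVal Z i ≤ σ := (Finset.mem_filter.mp hi).2
            have h2 := hγnn i
            nlinarith
        _ = ((Finset.univ.filter (fun i => singVal Z i ≤ σ)).card : ℝ) * σ ^ 2 := by
            rw [Finset.sum_const, nsmul_eq_mul]
        _ ≤ (n : ℝ) * σ ^ 2 := by
            have hc : ((Finset.univ.filter (fun i => singVal Z i ≤ σ)).card : ℝ) ≤ (n : ℝ) := by
              exact_mod_cast (Finset.card_filter_le _ _).trans (by simp)
            nlinarith [sq_nonneg σ]
    calc (1 / (2 * σ)) * ∑ i ∈ Finset.univ.filter (fun i => singVal Z i ≤ σ),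
          (singVal Z i - σ) ^ 2
        ≤ (1 / (2 * σ)) * ((n : ℝ) * σ ^ 2) := by
          exact mul_le_mul_of_nonneg_left hbound (by positivity)
      _ = ((n : ℝ) / 2) * σ := by field_simp
  · rw [gSmooth_eq_sum (0 : Matrix (Fin n) (Fin q) ℝ) σ hσ, nucNorm]
    simp only [singVal_zero, max_eq_right hσ.le]
    rw [Finset.sum_const, Finset.sum_const]
    simp only [Finset.card_univ, Fintype.card_fin, nsmul_eq_mul]
    field_simp
    try ring
end
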